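/- Every series-parallel pomset has a unique sequential factorisation: if U = V₁ · V₂ ⋯ Vₙ and U = W₁ · W₂ ⋯ Wₘ where all Vᵢ and Wⱼ are sequential primes, then n = m and Vᵢ = Wᵢ for all i. -/

import Mathlib

namespace WBKA

/-- Series-parallel terms over an alphabet `A`. -/
inductive SPTerm (A : Type) : Type
  | one : SPTerm A
  | atom : A → SPTerm A
  | seq : SPTerm A → SPTerm A → SPTerm A
  | par : SPTerm A → SPTerm A → SPTerm A

/-- The congruence generated by the series-parallel pomset axioms:
associativity of both compositions, commutativity of parallel composition,
and the empty pomset acting as unit for both. -/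
inductive SPEquiv {A : Type} : SPTerm A → SPTerm A → Prop
  | refl (u : SPTerm A) : SPEquiv u u
  | symm {u v : SPTerm A} : SPEquiv u v → SPEquiv v u
  | trans {u v w : SPTerm A} : SPEquiv u v → SPEquiv v w → SPEquiv u w
  | seqCongr {u u' v v' : SPTerm A} :
      SPEquiv u u' → SPEquiv v v' → SPEquiv (u.seq v) (u'.seq v')
  | parCongr {u u' v v' : SPTerm A} :
      SPEquiv u u' → SPEquiv v v' → SPEquiv (u.par v) (u'.par v')
  | seqAssoc (u v w : SPTerm A) : SPEquiv ((u.seq v).seq w) (u.seq (v.seq w))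
  | parAssoc (u v w : SPTerm A) : SPEquiv ((u.par v).par w) (u.par (v.par w))
  | parComm (u v : SPTerm A) : SPEquiv (u.par v) (v.par u)
  | seqOneLeft (u : SPTerm A) : SPEquiv (SPTerm.one.seq u) u
  | seqOneRight (u : SPTerm A) : SPEquiv (u.seq SPTerm.one) u
  | parOne (u : SPTerm A) : SPEquiv (u.par SPTerm.one) u

instance spSetoid (A : Type) : Setoid (SPTerm A) :=
  ⟨SPEquiv, SPEquiv.refl, SPEquiv.symm, SPEquiv.trans⟩

/-- Series-parallel pomsets over `A`, as the free algebra on the sp-pomset axioms. -/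
def Pomset (A : Type) : Type := Quotient (spSetoid A)

namespace Pomset

variable {A : Type}

def mk (u : SPTerm A) : Pomset A := Quotient.mk (spSetoid A) u

/-- The empty pomset `1`. -/
def eps : Pomset A := mk SPTerm.one

/-- The primitive pomset consisting of a single event labelled `a`. -/
def atom (a : A) : Pomset A := mk (SPTerm.atom a)

/-- Sequential composition of pomsets. -/
def seq : Pomset A → Pomset A → Pomset A :=
  Quotient.lift₂ (fun u v => mk (u.seq v))
    (fun _ _ _ _ hu hv => Quotient.sound (SPEquiv.seqCongr hu hv))

/-- Parallel composition of pomsets. -/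
def par : Pomset A → Pomset A → Pomset A :=
  Quotient.lift₂ (fun u v => mk (u.par v))
    (fun _ _ _ _ hu hv => Quotient.sound (SPEquiv.parCongr hu hv))

/-- `U` is the empty pomset. -/
def IsEmptyP (U : Pomset A) : Prop := U = eps

/-- `U` is primitive: it consists of a single labelled event. -/
def Primitive (U : Pomset A) : Prop := ∃ a : A, U = atom a

/-- `U` is sequential: a sequential composition of two non-empty pomsets. -/
def Sequential (U : Pomset A) : Prop :=
  ∃ V W : Pomset A, V ≠ eps ∧ W ≠ eps ∧ U = seq V W

/-- `U` is parallel: a parallel composition of two non-empty pomsets. -/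
def Parallel (U : Pomset A) : Prop :=
  ∃ V W : Pomset A, V ≠ eps ∧ W ≠ eps ∧ U = par V W

/-- `U` is a sequential prime. -/
def SeqPrime (U : Pomset A) : Prop :=
  U ≠ eps ∧ ∀ V W : Pomset A, U = seq V W → V = eps ∨ W = eps

/-- `U` is a parallel prime. -/
def ParPrime (U : Pomset A) : Prop :=
  U ≠ eps ∧ ∀ V W : Pomset A, U = par V W → V = eps ∨ W = eps

/-- Sequential product of a list of pomsets. -/
def seqProd (l : List (Pomset A)) : Pomset A := l.foldr seq eps

/-- Parallel product of a list of pomsets. -/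
def parProd (l : List (Pomset A)) : Pomset A := l.foldr par eps

end Pomset

/-- Pointwise sequential composition of pomset languages. -/
def langSeq {A : Type} (L M : Set (Pomset A)) : Set (Pomset A) :=
  Set.image2 Pomset.seq L M

/-- Pointwise parallel composition of pomset languages. -/
def langPar {A : Type} (L M : Set (Pomset A)) : Set (Pomset A) :=
  Set.image2 Pomset.par L M

/-- `n`-fold sequential power of a language. -/
def langPow {A : Type} (L : Set (Pomset A)) : ℕ → Set (Pomset A)
  | 0 => {Pomset.eps}
  | n + 1 => langSeq L (langPow L n)

/-- Kleene closure of a pomset language. -/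
def langStar {A : Type} (L : Set (Pomset A)) : Set (Pomset A) :=
  ⋃ n : ℕ, langPow L n

/-- Series-rational expressions over `A`. -/
inductive SR (A : Type) : Type
  | zero : SR A
  | one : SR A
  | atom : A → SR A
  | plus : SR A → SR A → SR A
  | seq : SR A → SR A → SR A
  | par : SR A → SR A → SR A
  | star : SR A → SR A

/-- The sp-language semantics of series-rational expressions. -/
def sem {A : Type} : SR A → Set (Pomset A)
  | .zero => ∅
  | .one => {Pomset.eps}
  | .atom a => {Pomset.atom a}
  | .plus e f => sem e ∪ sem f
  | .seq e f => langSeq (sem e) (sem f)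
  | .par e f => langPar (sem e) (sem f)
  | .star e => langStar (sem e)

/-- The syntactic predicate `F` characterising acceptance of the empty pomset. -/
inductive EF {A : Type} : SR A → Prop
  | one : EF SR.one
  | plusLeft {e : SR A} (f : SR A) : EF e → EF (SR.plus e f)
  | plusRight (e : SR A) {f : SR A} : EF f → EF (SR.plus e f)
  | seq {e f : SR A} : EF e → EF f → EF (SR.seq e f)
  | par {e f : SR A} : EF e → EF f → EF (SR.par e f)
  | star (e : SR A) : EF (SR.star e)

/-- Pomset automata. -/
structure PA (A : Type) (Q : Type) where
  acc : Set Q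
  δ : Q → A → Set Q
  γ : Q → Multiset Q → Set Q

/-- The run relation of a pomset automaton. -/
inductive Run {A Q : Type} (M : PA A Q) : Q → Pomset A → Q → Prop
  | triv (q : Q) : Run M q Pomset.eps q
  | seqUnit {q : Q} {a : A} {q' : Q} :
      q' ∈ M.δ q a → Run M q (Pomset.atom a) q'
  | comp {q : Q} {U : Pomset A} {q'' : Q} {V : Pomset A} {q' : Q} :
      Run M q U q'' → Run M q'' V q' → Run M q (U.seq V) q'
  | parUnit {q q' : Q} (l : List (Q × Pomset A × Q)) :
      q' ∈ M.γ q (↑(l.map Prod.fst) : Multiset Q) →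
      (∀ x ∈ l, x.2.2 ∈ M.acc) →
      (∀ x ∈ l, Run M x.1 x.2.1 x.2.2) →
      Run M q (Pomset.parProd (l.map fun x => x.2.1)) q'

/-- Language of a state of a pomset automaton. -/
def PA.lang {A Q : Type} (M : PA A Q) (q : Q) : Set (Pomset A) :=
  {U | ∃ q' ∈ M.acc, Run M q U q'}

/-- The triple `q →^U q'` matches the trivial-run rule. -/
def TrivialRun {A Q : Type} (_M : PA A Q) (q : Q) (U : Pomset A) (q' : Q) : Prop :=
  U = Pomset.eps ∧ q = q'

/-- `q →^U q'` is a sequential unit run. -/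
def SeqUnitRun {A Q : Type} (M : PA A Q) (q : Q) (U : Pomset A) (q' : Q) : Prop :=
  ∃ a : A, U = Pomset.atom a ∧ q' ∈ M.δ q a

/-- `q →^U q'` is a parallel unit run. -/
def ParUnitRun {A Q : Type} (M : PA A Q) (q : Q) (U : Pomset A) (q' : Q) : Prop :=
  ∃ l : List (Q × Pomset A × Q),
    q' ∈ M.γ q (↑(l.map Prod.fst) : Multiset Q) ∧
    (∀ x ∈ l, x.2.2 ∈ M.acc ∧ Run M x.1 x.2.1 x.2.2) ∧
    U = Pomset.parProd (l.map fun x => x.2.1)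

/-- `q →^U q'` is a unit run: a sequential or a parallel unit run. -/
def UnitRun {A Q : Type} (M : PA A Q) (q : Q) (U : Pomset A) (q' : Q) : Prop :=
  SeqUnitRun M q U q' ∨ ParUnitRun M q U q'

/-- `q →^U q'` is a composite run: a sequential composition of two non-trivial runs. -/
def CompositeRun {A Q : Type} (M : PA A Q) (q : Q) (U : Pomset A) (q' : Q) : Prop :=
  ∃ (V W : Pomset A) (q'' : Q),
    U = V.seq W ∧ Run M q V q'' ∧ Run M q'' W q' ∧
    ¬ TrivialRun M q V q'' ∧ ¬ TrivialRun M q'' W q'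

/-- The support preorder: `Supports M q' q` means `q' ⪯ q`. -/
inductive Supports {A Q : Type} (M : PA A Q) : Q → Q → Prop
  | refl (q : Q) : Supports M q q
  | trans {q r p : Q} : Supports M q r → Supports M r p → Supports M q p
  | deltaStep {q : Q} {a : A} {q' : Q} : q' ∈ M.δ q a → Supports M q' q
  | gammaStep {q : Q} {φ : Multiset Q} {q' : Q} : q' ∈ M.γ q φ → Supports M q' q
  | forkStep {q : Q} {φ : Multiset Q} {r : Q} :
      r ∈ φ → (M.γ q φ).Nonempty → Supports M r q

/-- A pomset automaton is fork-acyclic when every fork target `r` of `q`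
satisfies `r ≺ q`, i.e. `q ⋠ r`. -/
def ForkAcyclic {A Q : Type} (M : PA A Q) : Prop :=
  ∀ (q : Q) (φ : Multiset Q) (r : Q),
    r ∈ φ → (M.γ q φ).Nonempty → ¬ Supports M q r

/-- A set of states is support-closed. -/
def SupportClosed {A Q : Type} (M : PA A Q) (S : Set Q) : Prop :=
  ∀ q ∈ S, ∀ q' : Q, Supports M q' q → q' ∈ S

/-- Restriction of a pomset automaton to a set of states. -/
def PA.restrict {A Q : Type} (M : PA A Q) (S : Set Q) : PA A {q : Q // q ∈ S} where
  acc := {q | q.val ∈ M.acc}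
  δ := fun q a => {r | r.val ∈ M.δ q.val a}
  γ := fun q φ => {r | r.val ∈ M.γ q.val (φ.map Subtype.val)}

/-- `n`-forking automata. -/
def NForking {A Q : Type} (M : PA A Q) (n : ℕ) : Prop :=
  ∀ (q : Q) (φ : Multiset Q), (M.γ q φ).Nonempty → n ≤ Multiset.card φ

/-- Parsimonious automata: no fork target accepts the empty pomset. -/
def Parsimonious {A Q : Type} (M : PA A Q) : Prop :=
  ∀ (p : Q) (φ : Multiset Q) (q : Q),
    q ∈ φ → (M.γ p φ).Nonempty → Pomset.eps ∉ M.lang q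

/-- Flat-branching automata: forks from fork targets never reach accepting states. -/
def FlatBranching {A Q : Type} (M : PA A Q) : Prop :=
  ∀ (p : Q) (φ : Multiset Q) (q : Q),
    q ∈ φ → (M.γ p φ).Nonempty → ∀ ψ : Multiset Q, M.γ q ψ ∩ M.acc = ∅

/-- Well-structured pomset automata. -/
def WellStructured {A Q : Type} (M : PA A Q) : Prop :=
  (∀ (q : Q) (φ : Multiset Q), (M.γ q φ).Nonempty → 2 ≤ Multiset.card φ) ∧
  ∀ (p : Q) (φ : Multiset Q) (q : Q), q ∈ φ → (M.γ p φ).Nonempty →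
    q ∉ M.acc ∧ ∀ ψ : Multiset Q, M.γ q ψ ∩ M.acc = ∅

/-- The relation `⇝` characterising runs labelled by the empty pomset. -/
inductive Leadsto {A Q : Type} (M : PA A Q) : Q → Q → Prop
  | refl (p : Q) : Leadsto M p p
  | trans {p r q : Q} : Leadsto M p r → Leadsto M r q → Leadsto M p q
  | fork {p q : Q} (l : List (Q × Q)) :
      q ∈ M.γ p (↑(l.map Prod.fst) : Multiset Q) →
      (∀ x ∈ l, x.2 ∈ M.acc) →
      (∀ x ∈ l, Leadsto M x.1 x.2) →
      Leadsto M p q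

/-- Concatenate each expression of a set with `f` on the right. -/
def seqAfter {A : Type} (T : Set (SR A)) (f : SR A) : Set (SR A) :=
  (fun g => SR.seq g f) '' T

/-- Antimirov-style sequential derivatives of sr-expressions. -/
def deltaS {A : Type} : SR A → A → Set (SR A)
  | .zero, _ => ∅
  | .one, _ => ∅
  | .atom b, a => {g | g = SR.one ∧ a = b}
  | .plus e f, a => deltaS e a ∪ deltaS f a
  | .seq e f, a => seqAfter (deltaS e a) f ∪ {g | g ∈ deltaS f a ∧ EF e}
  | .par _ _, _ => ∅
  | .star e, a => seqAfter (deltaS e a) (SR.star e)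

/-- Antimirov-style parallel derivatives of sr-expressions. -/
def gammaS {A : Type} : SR A → Multiset (SR A) → Set (SR A)
  | .zero, _ => ∅
  | .one, _ => ∅
  | .atom _, _ => ∅
  | .plus e f, φ => gammaS e φ ∪ gammaS f φ
  | .seq e f, φ => seqAfter (gammaS e φ) f ∪ {g | g ∈ gammaS f φ ∧ EF e}
  | .par e f, φ => {g | g = SR.one ∧ φ = {e, f}}
  | .star e, φ => seqAfter (gammaS e φ) (SR.star e)

/-- The syntactic pomset automaton on sr-expressions. -/
def synPA (A : Type) : PA A (SR A) where
  acc := {e | EF e}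
  δ := deltaS
  γ := gammaS

/-- The parallel-nesting depth of an sr-expression. -/
def pdepth {A : Type} : SR A → ℕ
  | .zero => 0
  | .one => 0
  | .atom _ => 0
  | .plus e f => max (pdepth e) (pdepth f)
  | .seq e f => max (pdepth e) (pdepth f)
  | .par e f => max (pdepth e) (pdepth f) + 1
  | .star e => pdepth e

/-- A substitution `ζ : Σ → 2^{SP(Δ)}` is atomic. -/
def Atomic {A B : Type} (ζ : A → Set (Pomset B)) : Prop :=
  (∀ a : A, ∀ U ∈ ζ a, Pomset.SeqPrime U) ∧
  (∀ a b : A, (ζ a ∩ ζ b).Nonempty ↔ a = b)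

/-- Extension of a substitution to words. -/
def substWord {A B : Type} (ζ : A → Set (Pomset B)) : List A → Set (Pomset B)
  | [] => {Pomset.eps}
  | a :: w => langSeq (ζ a) (substWord ζ w)

/-- Extension of a substitution to word languages. -/
def substLang {A B : Type} (ζ : A → Set (Pomset B)) (L : Set (List A)) :
    Set (Pomset B) :=
  ⋃ w ∈ L, substWord ζ w

/-- `L_A(α)` for a set `α` of states: the atom language of `α`. -/
def atomLang {Q U : Type} (LA : Q → Set U) (α : Set Q) : Set U :=
  (⋂ q ∈ α, LA q) \ (⋃ (q : Q) (_ : q ∉ α), LA q)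


section Factorisation

variable {A : Type}

/-- Syntactic test for being (equivalent to) the empty term. -/
def isOne : SPTerm A → Bool
  | .one => true
  | .atom _ => false
  | .seq u v => isOne u && isOne v
  | .par u v => isOne u && isOne v

/-- Number of atoms in a term. -/
def sz : SPTerm A → ℕ
  | .one => 0
  | .atom _ => 1
  | .seq u v => sz u + sz v
  | .par u v => sz u + sz v

lemma sz_equiv {u v : SPTerm A} (h : SPEquiv u v) : sz u = sz v := by
  induction h <;> (try simp [sz] at *) <;> omega

lemma isOne_iff_sz (u : SPTerm A) : isOne u = true ↔ sz u = 0 := by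
  induction u <;> simp [isOne, sz, Bool.and_eq_true, *] <;> omega

lemma equiv_one_of_isOne {u : SPTerm A} (h : isOne u = true) : SPEquiv u SPTerm.one := by
  induction u with
  | one => exact SPEquiv.refl _
  | atom a => simp [isOne] at h
  | seq u v ihu ihv =>
      simp [isOne, Bool.and_eq_true] at h
      exact SPEquiv.trans (SPEquiv.seqCongr (ihu h.1) (ihv h.2)) (SPEquiv.seqOneLeft _)
  | par u v ihu ihv =>
      simp [isOne, Bool.and_eq_true] at h
      exact SPEquiv.trans (SPEquiv.parCongr (ihu h.1) (ihv h.2)) (SPEquiv.parOne _)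

lemma isOne_equiv {u v : SPTerm A} (h : SPEquiv u v) : isOne u = isOne v := by
  rw [Bool.eq_iff_iff, isOne_iff_sz, isOne_iff_sz, sz_equiv h]

/-- Sequential factorisation of a term, as a list of pomsets. -/
def factor : SPTerm A → List (Pomset A)
  | .one => []
  | .atom a => [Pomset.atom a]
  | .seq u v => factor u ++ factor v
  | .par u v =>
      if isOne u then factor v
      else if isOne v then factor u
      else [Pomset.mk (u.par v)]

lemma factor_isOne {u : SPTerm A} (h : isOne u = true) : factor u = [] := by
  induction u with
  | one => rfl
  | atom a => simp [isOne] at h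
  | seq u v ihu ihv =>
      simp [isOne, Bool.and_eq_true] at h
      simp [factor, ihu h.1, ihv h.2]
  | par u v ihu ihv =>
      simp [isOne, Bool.and_eq_true] at h
      simp [factor, h.1, ihv h.2]

lemma mk_eq_of_equiv {u v : SPTerm A} (h : SPEquiv u v) : Pomset.mk u = Pomset.mk v :=
  Quotient.sound h

lemma factor_equiv {u v : SPTerm A} (h : SPEquiv u v) : factor u = factor v := by
  induction h with
  | refl => rfl
  | symm _ ih => exact ih.symm
  | trans _ _ ih1 ih2 => exact ih1.trans ih2
  | seqCongr h1 h2 ih1 ih2 => simp [factor, ih1, ih2]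
  | @parCongr u u' v v' h1 h2 ih1 ih2 =>
      simp only [factor, isOne_equiv h1, isOne_equiv h2, ih1, ih2]
      split_ifs with h3 h4
      · rfl
      · rfl
      · exact congrArg (fun x => [x]) (mk_eq_of_equiv (SPEquiv.parCongr h1 h2))
  | seqAssoc u v w => simp [factor, List.append_assoc]
  | @parAssoc u v w =>
      rcases hu : isOne u <;> rcases hv : isOne v <;> rcases hw : isOne w <;>
        simp only [factor, isOne, hu, hv, hw, Bool.and_self, Bool.and_false,
          Bool.false_and, Bool.and_true, Bool.true_and, if_true, if_false,
          Bool.false_eq_true, ite_false, ite_true]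
      -- remaining goals need pomset equalities
      · -- u false, v false, w false : singletons, parAssoc
        exact congrArg (fun x => [x]) (mk_eq_of_equiv (SPEquiv.parAssoc u v w))
      · -- u false, v false, w true : [mk (par u v)] = [mk (u.par (v.par w))]
        refine congrArg (fun x => [x]) (mk_eq_of_equiv ?_)
        refine SPEquiv.parCongr (SPEquiv.refl u) ?_ |>.symm
        exact SPEquiv.trans (SPEquiv.parCongr (SPEquiv.refl v) (equiv_one_of_isOne hw))
          (SPEquiv.parOne v)
      · -- u false, v true, w false : [mk ((u.par v).par w)] = [mk (u.par (v.par w))]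
        exact congrArg (fun x => [x]) (mk_eq_of_equiv (SPEquiv.parAssoc u v w))
      · -- u true, v false, w false : [mk ((u.par v).par w)] = [mk (v.par w)]
        refine congrArg (fun x => [x]) (mk_eq_of_equiv ?_)
        refine SPEquiv.trans (SPEquiv.parAssoc u v w) ?_
        refine SPEquiv.trans (SPEquiv.parCongr (equiv_one_of_isOne hu)
          (SPEquiv.refl (v.par w))) ?_
        exact SPEquiv.trans (SPEquiv.parComm _ _) (SPEquiv.parOne _)
  | parComm u v =>
      rcases hu : isOne u <;> rcases hv : isOne v <;>
        simp only [factor, hu, hv, if_true, if_false, Bool.false_eq_true, ite_false, ite_true]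
      · exact congrArg (fun x => [x]) (mk_eq_of_equiv (SPEquiv.parComm u v))
      · rw [factor_isOne hu, factor_isOne hv]
  | seqOneLeft u => simp [factor]
  | seqOneRight u => simp [factor]
  | parOne u =>
      rcases hu : isOne u <;>
        simp only [factor, hu, isOne, if_true, if_false, Bool.false_eq_true, ite_false, ite_true]
      exact (factor_isOne hu).symm

/-- Sequential factorisation of a pomset. -/
def factorP : Pomset A → List (Pomset A) :=
  Quotient.lift factor (fun _ _ h => factor_equiv h)

lemma factorP_mk (u : SPTerm A) : factorP (Pomset.mk u) = factor u := rfl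

/-- Atom count of a pomset. -/
def szP : Pomset A → ℕ := Quotient.lift sz (fun _ _ h => sz_equiv h)

lemma szP_seq (U V : Pomset A) : szP (U.seq V) = szP U + szP V := by
  induction U using Quotient.inductionOn
  induction V using Quotient.inductionOn
  rfl

lemma eps_iff_szP (U : Pomset A) : U = Pomset.eps ↔ szP U = 0 := by
  induction U using Quotient.inductionOn with
  | h u =>
    constructor
    · intro h
      have h' : SPEquiv u SPTerm.one := Quotient.exact h
      simpa [szP, sz] using sz_equiv h'
    · intro h
      exact Quotient.sound (equiv_one_of_isOne ((isOne_iff_sz u).2 h))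

lemma seq_eps_right (U : Pomset A) : U.seq Pomset.eps = U := by
  induction U using Quotient.inductionOn with
  | h u => exact Quotient.sound (SPEquiv.seqOneRight u)

lemma eps_seq (U : Pomset A) : Pomset.eps.seq U = U := by
  induction U using Quotient.inductionOn with
  | h u => exact Quotient.sound (SPEquiv.seqOneLeft u)

lemma seq_assocP (U V W : Pomset A) : (U.seq V).seq W = U.seq (V.seq W) := by
  induction U using Quotient.inductionOn
  induction V using Quotient.inductionOn
  induction W using Quotient.inductionOn
  exact Quotient.sound (SPEquiv.seqAssoc _ _ _)

lemma seqProd_cons (V : Pomset A) (l : List (Pomset A)) :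
    Pomset.seqProd (V :: l) = V.seq (Pomset.seqProd l) := rfl

lemma factorP_seq (U V : Pomset A) : factorP (U.seq V) = factorP U ++ factorP V := by
  induction U using Quotient.inductionOn
  induction V using Quotient.inductionOn
  rfl

lemma seqProd_append (l₁ l₂ : List (Pomset A)) :
    Pomset.seqProd (l₁ ++ l₂) = (Pomset.seqProd l₁).seq (Pomset.seqProd l₂) := by
  induction l₁ with
  | nil => simp [Pomset.seqProd, eps_seq]
  | cons V l ih => rw [List.cons_append, seqProd_cons, seqProd_cons, ih, seq_assocP]

lemma seqProd_factor (u : SPTerm A) : Pomset.seqProd (factor u) = Pomset.mk u := by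
  induction u with
  | one => rfl
  | atom a =>
      show (Pomset.atom a).seq Pomset.eps = Pomset.mk (SPTerm.atom a)
      rw [seq_eps_right]; rfl
  | seq u v ihu ihv =>
      show Pomset.seqProd (factor u ++ factor v) = _
      rw [seqProd_append, ihu, ihv]; rfl
  | par u v ihu ihv =>
      simp only [factor]
      rcases hu : isOne u with _ | _ <;> rcases hv : isOne v with _ | _ <;>
        simp only [Bool.false_eq_true, ite_false, ite_true]
      · show (Pomset.mk (u.par v)).seq Pomset.eps = _
        rw [seq_eps_right]
      · rw [ihu]
        refine (mk_eq_of_equiv ?_).symm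
        exact SPEquiv.trans (SPEquiv.parCongr (SPEquiv.refl u) (equiv_one_of_isOne hv))
          (SPEquiv.parOne u)
      all_goals
        rw [ihv]
        refine (mk_eq_of_equiv ?_).symm
        refine SPEquiv.trans (SPEquiv.parCongr (equiv_one_of_isOne hu) (SPEquiv.refl v)) ?_
        exact SPEquiv.trans (SPEquiv.parComm _ _) (SPEquiv.parOne _)

lemma seqProd_factorP (U : Pomset A) : Pomset.seqProd (factorP U) = U := by
  induction U using Quotient.inductionOn with
  | h u => exact seqProd_factor u

lemma factor_ne_eps (u : SPTerm A) : ∀ V ∈ factor u, V ≠ Pomset.eps := by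
  induction u with
  | one => intro V hV; simp [factor] at hV
  | atom a =>
      intro V hV
      simp [factor] at hV
      subst hV
      rw [Ne, eps_iff_szP]
      simp [szP, Pomset.atom, Pomset.mk, sz]
  | seq u v ihu ihv =>
      intro V hV
      rcases List.mem_append.1 hV with h | h
      · exact ihu V h
      · exact ihv V h
  | par u v ihu ihv =>
      intro V hV
      simp only [factor] at hV
      split_ifs at hV with h1 h2
      · exact ihv V hV
      · exact ihu V hV
      · simp at hV
        subst hV
        rw [Ne, eps_iff_szP]
        have : sz u ≠ 0 := fun hc => h1 ((isOne_iff_sz u).2 hc)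
        show sz u + sz v ≠ 0
        omega

lemma factorP_ne_eps (U : Pomset A) : ∀ V ∈ factorP U, V ≠ Pomset.eps := by
  induction U using Quotient.inductionOn with
  | h u => exact factor_ne_eps u

lemma seqProd_ne_eps (l : List (Pomset A)) (hne : l ≠ [])
    (h : ∀ V ∈ l, V ≠ Pomset.eps) : Pomset.seqProd l ≠ Pomset.eps := by
  cases l with
  | nil => exact absurd rfl hne
  | cons V rest =>
      rw [seqProd_cons, Ne, eps_iff_szP, szP_seq]
      have hV : V ≠ Pomset.eps := h V (List.mem_cons_self)
      rw [Ne, eps_iff_szP] at hV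
      omega

lemma factorP_of_prime {U : Pomset A} (h : Pomset.SeqPrime U) : factorP U = [U] := by
  rcases hl : factorP U with _ | ⟨V, rest⟩
  · exfalso
    have := seqProd_factorP U
    rw [hl] at this
    exact h.1 this.symm
  · rcases rest with _ | ⟨W, rest'⟩
    · have := seqProd_factorP U
      rw [hl, seqProd_cons,
        show Pomset.seqProd ([] : List (Pomset A)) = Pomset.eps from rfl,
        seq_eps_right] at this
      rw [this]
    · exfalso
      have hprod := seqProd_factorP U
      rw [hl, seqProd_cons] at hprod
      rcases h.2 V (Pomset.seqProd (W :: rest')) hprod.symm with hc | hc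
      · exact factorP_ne_eps U V (by rw [hl]; exact List.mem_cons_self) hc
      · refine seqProd_ne_eps (W :: rest') (by simp) ?_ hc
        intro X hX
        exact factorP_ne_eps U X (by rw [hl]; exact List.mem_cons_of_mem _ hX)

lemma factorP_seqProd (l : List (Pomset A)) (h : ∀ V ∈ l, Pomset.SeqPrime V) :
    factorP (Pomset.seqProd l) = l := by
  induction l with
  | nil => rfl
  | cons V rest ih =>
      rw [seqProd_cons, factorP_seq, factorP_of_prime (h V (List.mem_cons_self)),
        ih (fun X hX => h X (List.mem_cons_of_mem _ hX))]
      rfl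

end Factorisation

/-- Sequential factorisations of sp-pomsets are unique: two sequences of
sequential primes with the same sequential product are equal. -/
theorem sequential_factorisation_unique {A : Type} (L M : List (Pomset A))
    (hL : ∀ V ∈ L, Pomset.SeqPrime V) (hM : ∀ W ∈ M, Pomset.SeqPrime W)
    (h : Pomset.seqProd L = Pomset.seqProd M) : L = M := by
  rw [← factorP_seqProd L hL, ← factorP_seqProd M hM, h]

end WBKA
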